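/- Let G be a finite group and N a nontrivial proper normal subgroup of G. If D(G) - D_G(N) = m, then D(G/N) ≤ m - 1. In particular, D(G/N) ≤ D(G) - 1. -/

import Mathlib

open Pointwise

/-- Two subgroups of `G` are conjugate. -/
def SubgroupConj {G : Type*} [Group G] (H K : Subgroup G) : Prop :=
  ∃ g : G, K = H.map (MulAut.conj g).toMonoidHom

/-- `D(G)`: the number of conjugacy classes of nontrivial subgroups of `G`
that are not self-normalizing. -/
noncomputable def DCount (G : Type*) [Group G] : ℕ :=
  Nat.card (Quot fun (H K : {H : Subgroup G // H ≠ ⊥ ∧ Subgroup.normalizer (H : Set G) ≠ H}) =>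
    SubgroupConj H.1 K.1)

/-- `D_G(N)`: the number of `G`-conjugacy classes of nontrivial, non self-normalizing
subgroups of `G` that are properly contained in `N`. -/
noncomputable def DCountIn (G : Type*) [Group G] (N : Subgroup G) : ℕ :=
  Nat.card (Quot fun (H K : {H : Subgroup G // H ≠ ⊥ ∧ Subgroup.normalizer (H : Set G) ≠ H ∧ H < N}) =>
    SubgroupConj H.1 K.1)

/-- `G` is a Frobenius group with kernel `N` and complement `H`. -/
def IsFrobeniusWith {G : Type*} [Group G] (N H : Subgroup G) : Prop :=
  H ≠ ⊥ ∧ H ≠ ⊤ ∧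
    (∀ g : G, g ∉ H → H ⊓ H.map (MulAut.conj g).toMonoidHom = ⊥) ∧
    (∀ x : G, x ∈ N ↔ ∀ g : G, g * x * g⁻¹ ∈ H → x = 1)

/-- A subgroup is elementary abelian for the prime `p`. -/
def IsElementaryAbelianSubgroup {G : Type*} [Group G] (p : ℕ) (N : Subgroup G) : Prop :=
  (∀ x ∈ N, x ^ p = 1) ∧ ∀ x ∈ N, ∀ y ∈ N, x * y = y * x

/-- The derived length of a group: the least `n` with `derivedSeries G n = ⊥`. -/
noncomputable def derivedLength (G : Type*) [Group G] : ℕ :=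
  sInf {n | derivedSeries G n = ⊥}

/-- The nilpotency class of a group: the least `n` with `lowerCentralSeries G n = ⊥`. -/
noncomputable def nilClass (G : Type*) [Group G] : ℕ :=
  sInf {n | (⊤ : Subgroup G).lowerCentralSeries n = ⊥}

section Aux
variable {G : Type*} [Group G]

lemma mem_conjMap {H : Subgroup G} {g x : G} :
    x ∈ H.map (MulAut.conj g).toMonoidHom ↔ g⁻¹ * x * g ∈ H := by
  constructor
  · rintro ⟨y, hy, rfl⟩
    simpa [MulAut.conj_apply, mul_assoc] using hy
  · intro h
    exact ⟨g⁻¹ * x * g, h, by simp [MulAut.conj_apply]; group⟩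

lemma subgroupConj_equiv : Equivalence (SubgroupConj (G := G)) := by
  constructor
  · intro H; exact ⟨1, by ext x; simp [mem_conjMap]⟩
  · rintro H K ⟨g, rfl⟩
    refine ⟨g⁻¹, ?_⟩
    ext x; simp [mem_conjMap]; constructor <;> intro h
    · simpa [mul_assoc] using h
    · group at h ⊢; simpa [mul_assoc] using h
  · rintro H K L ⟨g, rfl⟩ ⟨g', rfl⟩
    refine ⟨g' * g, ?_⟩
    ext x; simp [mem_conjMap, mul_assoc]

lemma quot_mk_eq_iff {α : Type*} {r : α → α → Prop} (h : Equivalence r) {a b : α} :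
    Quot.mk r a = Quot.mk r b ↔ r a b := by
  exact ⟨fun hg => h.eqvGen_iff.mp (Quot.eqvGen_exact hg), Quot.sound⟩

variable {Q : Type*} [Group Q]

/-- comap commutes with conjugation. -/
lemma comap_conjMap (f : G →* Q) (H : Subgroup Q) (g : G) :
    (H.comap f).map (MulAut.conj g).toMonoidHom
      = (H.map (MulAut.conj (f g)).toMonoidHom).comap f := by
  ext x
  rw [mem_conjMap, Subgroup.mem_comap, Subgroup.mem_comap, mem_conjMap]
  simp

lemma conjMap_of_normal {N : Subgroup G} [N.Normal] (g : G) :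
    N.map (MulAut.conj g).toMonoidHom = N := by
  ext x
  rw [mem_conjMap]
  constructor
  · intro h; simpa [mul_assoc] using Subgroup.Normal.conj_mem ‹N.Normal› _ h g
  · intro h; simpa [mul_assoc] using Subgroup.Normal.conj_mem ‹N.Normal› _ h g⁻¹

lemma conjMap_le_of_normal {N H : Subgroup G} [N.Normal] (hH : H ≤ N) (g : G) :
    H.map (MulAut.conj g).toMonoidHom ≤ N := by
  intro x hx
  rw [mem_conjMap] at hx
  simpa [mul_assoc] using Subgroup.Normal.conj_mem ‹N.Normal› _ (hH hx) g

end Aux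

section Main

variable {G : Type*} [Group G] [Finite G] (N : Subgroup G) [N.Normal]

local notation "mk" => QuotientGroup.mk' N

lemma N_lt_comap {H : Subgroup (G ⧸ N)} (hH : H ≠ ⊥) : N < H.comap mk := by
  rw [SetLike.lt_iff_le_and_exists]
  constructor
  · intro x hx
    have h0 : (QuotientGroup.mk' N) x = 1 := (QuotientGroup.eq_one_iff x).mpr hx
    rw [Subgroup.mem_comap]
    exact h0 ▸ H.one_mem
  · obtain ⟨y, hy, hy1⟩ := (Subgroup.bot_or_exists_ne_one H).resolve_left hH
    obtain ⟨x, rfl⟩ := QuotientGroup.mk'_surjective N y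
    exact ⟨x, hy, fun hx => hy1 ((QuotientGroup.eq_one_iff x).mpr hx)⟩

lemma comap_ne_bot (h1 : N ≠ ⊥) {H : Subgroup (G ⧸ N)} (hH : H ≠ ⊥) : H.comap mk ≠ ⊥ := by
  intro h
  exact h1 (le_bot_iff.mp (h ▸ (N_lt_comap N hH).le))

lemma normalizer_comap_ne {H : Subgroup (G ⧸ N)} (hH : Subgroup.normalizer (H : Set (G ⧸ N)) ≠ H) :
    Subgroup.normalizer ((H.comap mk : Subgroup G) : Set G) ≠ H.comap mk := by
  have hnle : ¬ Subgroup.normalizer (H : Set (G ⧸ N)) ≤ H := fun hle => hH (le_antisymm hle H.le_normalizer)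
  obtain ⟨z, hz, hzH⟩ := SetLike.not_le_iff_exists.mp hnle
  obtain ⟨g, rfl⟩ := QuotientGroup.mk'_surjective N z
  intro heq
  apply hzH
  have hg : g ∈ Subgroup.normalizer ((H.comap mk : Subgroup G) : Set G) := by
    rw [Subgroup.mem_normalizer_iff]
    intro y
    rw [Subgroup.mem_comap, Subgroup.mem_comap, map_mul, map_mul, map_inv]
    exact Subgroup.mem_normalizer_iff.mp hz _
  rw [heq, Subgroup.mem_comap] at hg
  exact hg

end Main

section Key

lemma subtype_conj_equiv {G : Type*} [Group G] {p : Subgroup G → Prop} :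
    Equivalence (fun (H K : {H : Subgroup G // p H}) => SubgroupConj H.1 K.1) :=
  ⟨fun H => subgroupConj_equiv.refl H.1, fun h => subgroupConj_equiv.symm h,
    fun h h' => subgroupConj_equiv.trans h h'⟩

variable {G : Type*} [Group G] [Finite G] (N : Subgroup G) [N.Normal]

local notation "mk" => QuotientGroup.mk' N

lemma key (h1 : N ≠ ⊥) (h2 : N ≠ ⊤) :
    DCount (G ⧸ N) + DCountIn G N + 1 ≤ DCount G := by
  classical
  let rA := fun (H K : {H : Subgroup (G ⧸ N) // H ≠ ⊥ ∧ Subgroup.normalizer (H : Set (G ⧸ N)) ≠ H}) =>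
    SubgroupConj H.1 K.1
  let rB := fun (H K : {H : Subgroup G // H ≠ ⊥ ∧ Subgroup.normalizer (H : Set G) ≠ H ∧ H < N}) =>
    SubgroupConj H.1 K.1
  let rC := fun (H K : {H : Subgroup G // H ≠ ⊥ ∧ Subgroup.normalizer (H : Set G) ≠ H}) =>
    SubgroupConj H.1 K.1
  let cOfA : {H : Subgroup (G ⧸ N) // H ≠ ⊥ ∧ Subgroup.normalizer (H : Set (G ⧸ N)) ≠ H} →
      {H : Subgroup G // H ≠ ⊥ ∧ Subgroup.normalizer (H : Set G) ≠ H} :=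
    fun H => ⟨H.1.comap mk, comap_ne_bot N h1 H.2.1, normalizer_comap_ne N H.2.2⟩
  let cOfB : {H : Subgroup G // H ≠ ⊥ ∧ Subgroup.normalizer (H : Set G) ≠ H ∧ H < N} →
      {H : Subgroup G // H ≠ ⊥ ∧ Subgroup.normalizer (H : Set G) ≠ H} :=
    fun H => ⟨H.1, H.2.1, H.2.2.1⟩
  let cN : {H : Subgroup G // H ≠ ⊥ ∧ Subgroup.normalizer (H : Set G) ≠ H} :=
    ⟨N, h1, by rw [Subgroup.normalizer_eq_top_iff.mpr inferInstance]; exact fun h => h2 h.symm⟩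
  have soundA : ∀ H K, rA H K → Quot.mk rC (cOfA H) = Quot.mk rC (cOfA K) := by
    rintro H K ⟨g, hg⟩
    obtain ⟨g', rfl⟩ := QuotientGroup.mk'_surjective N g
    refine Quot.sound ⟨g', ?_⟩
    show K.1.comap mk = _
    rw [comap_conjMap]
    exact congrArg _ hg
  have soundB : ∀ H K, rB H K → Quot.mk rC (cOfB H) = Quot.mk rC (cOfB K) := by
    rintro H K ⟨g, hg⟩
    exact Quot.sound ⟨g, hg⟩
  let f : (Quot rA) ⊕ (Quot rB) ⊕ PUnit.{1} → Quot rC := fun x =>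
    match x with
    | .inl a => Quot.lift (fun H => Quot.mk rC (cOfA H)) soundA a
    | .inr (.inl b) => Quot.lift (fun H => Quot.mk rC (cOfB H)) soundB b
    | .inr (.inr _) => Quot.mk rC cN
  have hinj : Function.Injective f := by
    rintro (a | b | ⟨⟩) (a' | b' | ⟨⟩) h
    · induction a using Quot.ind with | _ H => ?_
      induction a' using Quot.ind with | _ K => ?_
      obtain ⟨g, hg⟩ := (quot_mk_eq_iff subtype_conj_equiv).mp h
      rw [comap_conjMap] at hg
      have h' := Subgroup.comap_injective (QuotientGroup.mk'_surjective N) hg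
      exact congrArg Sum.inl (Quot.sound ⟨mk g, h'⟩)
    · exfalso
      induction a using Quot.ind with | _ H => ?_
      induction b' using Quot.ind with | _ K => ?_
      obtain ⟨g, hg⟩ := (quot_mk_eq_iff subtype_conj_equiv).mp h
      have hle : N ≤ K.1 := by
        rw [hg]
        calc N = N.map (MulAut.conj g).toMonoidHom := (conjMap_of_normal g).symm
        _ ≤ (H.1.comap mk).map (MulAut.conj g).toMonoidHom :=
          Subgroup.map_mono (N_lt_comap N H.2.1).le
      exact absurd (lt_of_le_of_lt hle K.2.2.2) (lt_irrefl N)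
    · exfalso
      induction a using Quot.ind with | _ H => ?_
      obtain ⟨g, hg⟩ := subgroupConj_equiv.symm ((quot_mk_eq_iff subtype_conj_equiv).mp h)
      rw [conjMap_of_normal] at hg
      have hg' : H.1.comap mk = N := hg
      exact absurd (lt_of_lt_of_le (N_lt_comap N H.2.1) hg'.le) (lt_irrefl N)
    · exfalso
      induction b using Quot.ind with | _ K => ?_
      induction a' using Quot.ind with | _ H => ?_
      obtain ⟨g, hg⟩ := (quot_mk_eq_iff subtype_conj_equiv).mp h
      have hg' : H.1.comap mk = K.1.map (MulAut.conj g).toMonoidHom := hg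
      have hle : H.1.comap mk ≤ N := hg' ▸ conjMap_le_of_normal K.2.2.2.le g
      exact absurd (lt_of_lt_of_le (N_lt_comap N H.2.1) hle) (lt_irrefl N)
    · induction b using Quot.ind with | _ H => ?_
      induction b' using Quot.ind with | _ K => ?_
      obtain ⟨g, hg⟩ := (quot_mk_eq_iff subtype_conj_equiv).mp h
      exact congrArg (Sum.inr ∘ Sum.inl) (Quot.sound ⟨g, hg⟩)
    · exfalso
      induction b using Quot.ind with | _ K => ?_
      obtain ⟨g, hg⟩ := subgroupConj_equiv.symm ((quot_mk_eq_iff subtype_conj_equiv).mp h)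
      rw [conjMap_of_normal] at hg
      have hg' : K.1 = N := hg
      exact absurd (lt_of_le_of_lt hg'.ge K.2.2.2) (lt_irrefl N)
    · exfalso
      induction a' using Quot.ind with | _ H => ?_
      obtain ⟨g, hg⟩ := (quot_mk_eq_iff subtype_conj_equiv).mp h
      have hg' : (cOfA H).1 = N := by rw [hg]; exact conjMap_of_normal g
      have hg'' : H.1.comap mk = N := hg'
      exact absurd (lt_of_lt_of_le (N_lt_comap N H.2.1) hg''.le) (lt_irrefl N)
    · exfalso
      induction b' using Quot.ind with | _ K => ?_
      obtain ⟨g, hg⟩ := (quot_mk_eq_iff subtype_conj_equiv).mp h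
      have hg' : (cOfB K).1 = N := by rw [hg]; exact conjMap_of_normal g
      have hg'' : K.1 = N := hg'
      exact absurd (lt_of_le_of_lt hg''.ge K.2.2.2) (lt_irrefl N)
    · rfl
  have hcard := Nat.card_le_card_of_injective f hinj
  rw [Nat.card_sum, Nat.card_sum] at hcard
  simpa [DCount, DCountIn, add_assoc] using hcard

end Key


theorem stmt3 (G : Type*) [Group G] [Finite G] (N : Subgroup G) [N.Normal]
    (h1 : N ≠ ⊥) (h2 : N ≠ ⊤) (m : ℕ) (hm : DCount G - DCountIn G N = m) :
    DCount (G ⧸ N) ≤ m - 1 ∧ DCount (G ⧸ N) ≤ DCount G - 1 := by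
  have hkey := key N h1 h2
  have hb : DCountIn G N ≤ DCount G := by omega
  omega
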